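/- Let G be a finite group, H a subgroup, and x ∈ G \ H with HxH = Hx⁻¹H and |H|/|H ∩ H^x| odd. Then for every even integer b with 0 ≤ b ≤ |H|, there exist b pairwise disjoint right transversals of H in HxH whose union is inverse-closed. -/

import Mathlib

open scoped Pointwise

lemma aux_fill {ι : Type*} [DecidableEq ι] (m : ℕ) (s : Finset ι) :
    ∀ c : ℕ, c ≤ s.card * m → ∃ y : ι → ℕ, (∀ i, y i ≤ m) ∧ ∑ i ∈ s, y i = c := by
  induction s using Finset.induction with
  | empty =>
    intro c hc
    simp only [Finset.card_empty, zero_mul, Nat.le_zero] at hc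
    exact ⟨fun _ => 0, fun _ => Nat.zero_le _, by simp [hc]⟩
  | @insert a s ha ih =>
    intro c hc
    rw [Finset.card_insert_of_notMem ha] at hc
    rw [add_mul, one_mul] at hc
    obtain ⟨y, hy, hsum⟩ := ih (c - min c m) (by omega)
    refine ⟨fun i => if i = a then min c m else y i, fun i => ?_, ?_⟩
    · dsimp only; split
      · omega
      · exact hy i
    · rw [Finset.sum_insert ha, if_pos rfl,
        Finset.sum_congr rfl (fun i hi => if_neg (by rintro rfl; exact ha hi)), hsum]
      omega

lemma aux_invariant_subset {α : Type*} [DecidableEq α] (f : α → α) (hf : ∀ a, f (f a) = a) :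
    ∀ n : ℕ, ∀ F : Finset α, (∀ a ∈ F, f a ∈ F) → 2 * n ≤ F.card →
      ∃ S ⊆ F, S.card = 2 * n ∧ ∀ a ∈ S, f a ∈ S := by
  intro n
  induction n with
  | zero => exact fun F _ _ => ⟨∅, Finset.empty_subset _, by simp, by simp⟩
  | succ n ih =>
    intro F hF hn
    obtain ⟨S, hSF, hScard, hSinv⟩ := ih F hF (by omega)
    have hsd := Finset.card_sdiff_of_subset hSF
    have hinv' : ∀ a ∈ F \ S, f a ∈ F \ S := by
      intro a ha
      rw [Finset.mem_sdiff] at ha ⊢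
      exact ⟨hF a ha.1, fun h => ha.2 (by rw [← hf a]; exact hSinv _ h)⟩
    have key : ∀ p q : α, p ∈ F \ S → q ∈ F \ S → p ≠ q → (f p = p ∨ f p = q) →
        (f q = p ∨ f q = q) → ∃ S' ⊆ F, S'.card = 2 * (n + 1) ∧ ∀ a ∈ S', f a ∈ S' := by
      intro p q hp hq hpq hfp hfq
      rw [Finset.mem_sdiff] at hp hq
      refine ⟨insert p (insert q S), ?_, ?_, ?_⟩
      · intro a ha
        rcases Finset.mem_insert.mp ha with rfl | ha
        · exact hp.1
        · rcases Finset.mem_insert.mp ha with rfl | ha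
          · exact hq.1
          · exact hSF ha
      · rw [Finset.card_insert_of_notMem, Finset.card_insert_of_notMem hq.2, hScard]
        · omega
        · rw [Finset.mem_insert]
          rintro (rfl | h)
          · exact hpq rfl
          · exact hp.2 h
      · intro a ha
        rcases Finset.mem_insert.mp ha with rfl | ha
        · rcases hfp with h | h <;> rw [h] <;> simp [Finset.mem_insert]
        · rcases Finset.mem_insert.mp ha with rfl | ha
          · rcases hfq with h | h <;> rw [h] <;> simp [Finset.mem_insert]
          · exact Finset.mem_insert_of_mem (Finset.mem_insert_of_mem (hSinv _ ha))
    by_cases hex : ∃ g ∈ F \ S, f g ≠ g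
    · obtain ⟨g, hg, hgf⟩ := hex
      exact key g (f g) hg (hinv' _ hg) (fun h => hgf h.symm) (Or.inr rfl) (Or.inl (hf g))
    · push_neg at hex
      have h2 : 1 < (F \ S).card := by omega
      obtain ⟨p, hp, q, hq, hpq⟩ := Finset.one_lt_card.mp h2
      exact key p q hp hq hpq (Or.inl (hex p hp)) (Or.inr (hex q hq))

lemma aux_exists_fixed {α : Type*} [DecidableEq α] (f : α → α) (hf : ∀ a, f (f a) = a) :
    ∀ F : Finset α, (∀ a ∈ F, f a ∈ F) → Odd F.card → ∃ a ∈ F, f a = a := by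
  intro F
  induction F using Finset.strongInduction with
  | _ F ih =>
    intro hF hodd
    have hne : F.Nonempty := by
      rw [← Finset.card_pos]
      rcases hodd with ⟨t, ht⟩; omega
    obtain ⟨a, ha⟩ := hne
    by_cases hfa : f a = a
    · exact ⟨a, ha, hfa⟩
    · have hfaF : f a ∈ F.erase a := Finset.mem_erase.mpr ⟨hfa, hF a ha⟩
      set F' := (F.erase a).erase (f a) with hF'
      have hsub : F' ⊂ F := by
        refine Finset.ssubset_iff_of_subset (fun b hb => ?_) |>.mpr ⟨a, ha, ?_⟩
        · exact Finset.mem_of_mem_erase (Finset.mem_of_mem_erase hb)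
        · simp [hF']
      have hinv : ∀ b ∈ F', f b ∈ F' := by
        intro b hb
        have hb1 : b ≠ f a := Finset.ne_of_mem_erase hb
        have hb2 : b ≠ a := Finset.ne_of_mem_erase (Finset.mem_of_mem_erase hb)
        have hbF : b ∈ F := Finset.mem_of_mem_erase (Finset.mem_of_mem_erase hb)
        refine Finset.mem_erase.mpr ⟨?_, Finset.mem_erase.mpr ⟨?_, hF b hbF⟩⟩
        · intro h; exact hb2 (by rw [← hf b, h, hf])
        · intro h; exact hb1 (by rw [← hf b, h])
      have hcard : F'.card = F.card - 2 := by
        rw [hF', Finset.card_erase_of_mem hfaF, Finset.card_erase_of_mem ha]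
        omega
      have hodd' : Odd F'.card := by
        rcases hodd with ⟨t, ht⟩
        have h2 : 2 ≤ F.card := by
          have := Finset.card_le_card (hsub.subset)
          have := Finset.card_pos.mpr ⟨f a, hfaF⟩
          rw [Finset.card_erase_of_mem ha] at this
          omega
        exact ⟨t - 1, by omega⟩
      obtain ⟨b, hb, hbf⟩ := ih F' hsub hinv hodd'
      exact ⟨b, Finset.mem_of_mem_erase (Finset.mem_of_mem_erase hb), hbf⟩

lemma aux_invariant_subset' {α : Type*} [DecidableEq α] (f : α → α) (hf : ∀ a, f (f a) = a)
    (F : Finset α) (hF : ∀ a ∈ F, f a ∈ F) (t : ℕ) (ht : t ≤ F.card)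
    (hpar : Even t ∨ Odd F.card) :
    ∃ S ⊆ F, S.card = t ∧ ∀ a ∈ S, f a ∈ S := by
  by_cases hev : Even t
  · obtain ⟨n, hn⟩ := hev
    obtain ⟨S, h1, h2, h3⟩ := aux_invariant_subset f hf n F hF (by omega)
    exact ⟨S, h1, by omega, h3⟩
  · rcases hpar with h | hodd
    · exact absurd h hev
    obtain ⟨a, ha, hfa⟩ := aux_exists_fixed f hf F hF hodd
    have ht1 : 1 ≤ t := by
      rcases Nat.eq_zero_or_pos t with rfl | h
      · exact absurd (Even.zero) hev
      · exact h
    have hinv : ∀ b ∈ F.erase a, f b ∈ F.erase a := by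
      intro b hb
      refine Finset.mem_erase.mpr ⟨?_, hF b (Finset.mem_of_mem_erase hb)⟩
      intro h
      exact Finset.ne_of_mem_erase hb (by rw [← hf b, h, hfa])
    have hev' : Even (t - 1) := by
      rcases Nat.even_or_odd t with h | h
      · exact absurd h hev
      · rcases h with ⟨u, hu⟩; exact ⟨u, by omega⟩
    obtain ⟨n, hn⟩ := hev'
    obtain ⟨S, h1, h2, h3⟩ := aux_invariant_subset f hf n (F.erase a) hinv
      (by rw [Finset.card_erase_of_mem ha]; omega)
    have haS : a ∉ S := fun h => Finset.notMem_erase a F (h1 h)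
    refine ⟨insert a S, ?_, ?_, ?_⟩
    · intro b hb
      rcases Finset.mem_insert.mp hb with rfl | hb
      · exact ha
      · exact Finset.mem_of_mem_erase (h1 hb)
    · rw [Finset.card_insert_of_notMem haS]; omega
    · intro b hb
      rcases Finset.mem_insert.mp hb with rfl | hb
      · rw [hfa]; exact Finset.mem_insert_self _ _
      · exact Finset.mem_insert_of_mem (h3 _ hb)

lemma aux_all_eq {ι : Type*} (P : Finset ι) (f : ι → ℕ) (m : ℕ)
    (hlow : ∀ p ∈ P, m ≤ f p) (htot : ∑ p ∈ P, f p = P.card * m) :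
    ∀ p ∈ P, f p = m := by
  by_contra h
  push_neg at h
  obtain ⟨p, hp, hne⟩ := h
  have hlt : ∑ _p ∈ P, m < ∑ p ∈ P, f p :=
    Finset.sum_lt_sum hlow ⟨p, hp, lt_of_le_of_ne (hlow p hp) (Ne.symm hne)⟩
  rw [Finset.sum_const, smul_eq_mul, htot] at hlt
  exact lt_irrefl _ hlt


/-- T is a right transversal of H in A: T ⊆ A and T meets the right coset of
each element of A exactly once. -/
def IsRightTransversalOn {G : Type*} [Group G] (H : Subgroup G) (T A : Set G) : Prop :=
  T ⊆ A ∧ ∀ g ∈ A, ∃! t, t ∈ T ∧ t * g⁻¹ ∈ H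

theorem stmt7 {G : Type*} [Group G] [Fintype G] (H : Subgroup G) (x : G)
    (hx : x ∉ H)
    (heq : (H : Set G) * {x} * (H : Set G) = (H : Set G) * {x⁻¹} * (H : Set G))
    (hodd : Odd (Nat.card H /
      ((H : Set G) ∩ ((fun g => x⁻¹ * g * x) '' (H : Set G))).ncard)) :
    ∀ b : ℕ, Even b → b ≤ Nat.card H →
      ∃ T : Fin b → Set G,
        (∀ i, IsRightTransversalOn H (T i) ((H : Set G) * {x} * (H : Set G))) ∧
        (Pairwise fun i j => Disjoint (T i) (T j)) ∧
        (⋃ i, T i)⁻¹ = ⋃ i, T i := by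
  classical
  intro b hb hble
  have h1H : (1 : G) ∈ (H : Set G) := H.one_mem
  set Dset : Set G := (H : Set G) * {x} * (H : Set G) with hDdef
  have memD : ∀ g : G, g ∈ Dset ↔ ∃ u ∈ (H : Set G), ∃ v ∈ (H : Set G), u * x * v = g := by
    intro g
    simp only [hDdef, Set.mem_mul, Set.mem_singleton_iff]
    constructor
    · rintro ⟨s, ⟨u, hu, z, rfl, rfl⟩, v, hv, rfl⟩
      exact ⟨u, hu, v, hv, rfl⟩
    · rintro ⟨u, hu, v, hv, rfl⟩
      exact ⟨u * x, ⟨u, hu, x, rfl, rfl⟩, v, hv, rfl⟩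
  obtain ⟨h1, hh1, h2, hh2, hx12⟩ :
      ∃ u ∈ (H : Set G), ∃ v ∈ (H : Set G), u * x * v = x⁻¹ := by
    have hmem : x⁻¹ ∈ (H : Set G) * {x⁻¹} * (H : Set G) := by
      simp only [Set.mem_mul, Set.mem_singleton_iff]
      exact ⟨1 * x⁻¹, ⟨1, h1H, x⁻¹, rfl, rfl⟩, 1, h1H, by simp⟩
    rw [← heq] at hmem
    exact (memD _).mp hmem
  have invD : ∀ g ∈ Dset, g⁻¹ ∈ Dset := by
    intro g hg
    obtain ⟨u, hu, v, hv, rfl⟩ := (memD g).mp hg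
    have : (u * x * v)⁻¹ ∈ (H : Set G) * {x⁻¹} * (H : Set G) := by
      simp only [Set.mem_mul, Set.mem_singleton_iff]
      exact ⟨v⁻¹ * x⁻¹, ⟨v⁻¹, inv_mem hv, x⁻¹, rfl, rfl⟩, u⁻¹, inv_mem hu, by group⟩
    rw [heq]
    exact this
  set q : G → G ⧸ H := fun g => QuotientGroup.mk g⁻¹ with hqdef
  have qiff : ∀ g g' : G, q g = q g' ↔ g * g'⁻¹ ∈ H := by
    intro g g'
    rw [hqdef]
    simp only [QuotientGroup.eq, inv_inv]
  set DF : Finset G := Dset.toFinset with hDF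
  set HF : Finset G := (H : Set G).toFinset with hHF
  set KF : Finset G :=
    ((H : Set G) ∩ ((fun g => x⁻¹ * g * x) '' (H : Set G))).toFinset with hKF
  set m : ℕ := KF.card with hm
  set QD : Finset (G ⧸ H) := DF.image q with hQD
  set k : ℕ := QD.card with hk
  have memKF : ∀ c : G, c ∈ KF ↔ c ∈ (H : Set G) ∧ ∃ v ∈ (H : Set G), x⁻¹ * v * x = c := by
    intro c
    simp [hKF, Set.mem_toFinset, Set.mem_image]
  have memDF : ∀ g : G, g ∈ DF ↔ g ∈ Dset := fun g => Set.mem_toFinset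
  have memHF : ∀ g : G, g ∈ HF ↔ g ∈ (H : Set G) := fun g => Set.mem_toFinset
  have hxD : x ∈ DF := (memDF x).mpr ((memD x).mpr ⟨1, h1H, 1, h1H, by group⟩)
  -- representatives of cosets
  have repQD : ∀ a ∈ QD, ∃ h0 ∈ (H : Set G), q (x * h0) = a := by
    intro a ha
    obtain ⟨g, hg, rfl⟩ := Finset.mem_image.mp ha
    obtain ⟨u, hu, v, hv, rfl⟩ := (memD g).mp ((memDF g).mp hg)
    refine ⟨v, hv, ((qiff _ _).mpr ?_).symm⟩
    have : u * x * v * (x * v)⁻¹ = u := by group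
    rw [this]
    exact hu
  -- |H| = k * m
  have HFcard : HF.card = k * m := by
    have hmaps : ∀ h ∈ HF, q (x * h) ∈ QD := by
      intro h hh
      rw [hQD]
      exact Finset.mem_image_of_mem q
        ((memDF _).mpr ((memD _).mpr ⟨1, h1H, h, (memHF h).mp hh, by group⟩))
    rw [Finset.card_eq_sum_card_fiberwise hmaps]
    have hfib : ∀ a ∈ QD, (HF.filter (fun h => q (x * h) = a)).card = m := by
      intro a ha
      obtain ⟨h0, hh0, hqh0⟩ := repQD a ha
      have hfeq : HF.filter (fun h => q (x * h) = a) = KF.image (· * h0) := by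
        ext h
        rw [Finset.mem_filter, Finset.mem_image, memHF]
        constructor
        · rintro ⟨hhH, hqa⟩
          have hq2 : x * h * (x * h0)⁻¹ ∈ H := (qiff _ _).mp (by rw [hqa, hqh0])
          have hcomp : x * h * (x * h0)⁻¹ = x * (h * h0⁻¹) * x⁻¹ := by group
          refine ⟨h * h0⁻¹, (memKF _).mpr ⟨mul_mem hhH (inv_mem hh0),
            ⟨x * (h * h0⁻¹) * x⁻¹, by rw [← hcomp]; exact hq2, by group⟩⟩, by group⟩
        · rintro ⟨c, hc, rfl⟩
          obtain ⟨hcH, v, hv, hvc⟩ := (memKF c).mp hc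
          refine ⟨mul_mem hcH hh0, ?_⟩
          rw [← hqh0]
          refine (qiff _ _).mpr ?_
          have : x * (c * h0) * (x * h0)⁻¹ = x * c * x⁻¹ := by group
          rw [this, ← hvc]
          have : x * (x⁻¹ * v * x) * x⁻¹ = v := by group
          rw [this]
          exact hv
      rw [hfeq, Finset.card_image_of_injective _ (mul_left_injective h0), hm]
    rw [Finset.sum_congr rfl hfib, Finset.sum_const, smul_eq_mul, hk]
  -- |D| = k * |H|
  have DFcard : DF.card = k * HF.card := by
    have hmaps : ∀ g ∈ DF, q g ∈ QD := fun g hg => by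
      rw [hQD]; exact Finset.mem_image_of_mem q hg
    rw [Finset.card_eq_sum_card_fiberwise hmaps]
    have hfib : ∀ a ∈ QD, (DF.filter (fun g => q g = a)).card = HF.card := by
      intro a ha
      obtain ⟨g0, hg0, hqg0⟩ := Finset.mem_image.mp ha
      have hfeq : DF.filter (fun g => q g = a) = HF.image (· * g0) := by
        ext g
        rw [Finset.mem_filter, Finset.mem_image]
        constructor
        · rintro ⟨hgD, hqa⟩
          have hq2 : g * g0⁻¹ ∈ H := (qiff _ _).mp (by rw [hqa, hqg0])
          exact ⟨g * g0⁻¹, (memHF _).mpr hq2, by group⟩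
        · rintro ⟨u, hu, rfl⟩
          rw [memHF] at hu
          obtain ⟨u0, hu0, v0, hv0, h0eq⟩ := (memD g0).mp ((memDF g0).mp hg0)
          constructor
          · rw [memDF]
            refine (memD _).mpr ⟨u * u0, mul_mem hu hu0, v0, hv0, by rw [← h0eq]; group⟩
          · rw [← hqg0]
            refine (qiff _ _).mpr ?_
            have : u * g0 * g0⁻¹ = u := by group
            rw [this]; exact hu
      rw [hfeq, Finset.card_image_of_injective _ (mul_left_injective g0)]
    rw [Finset.sum_congr rfl hfib, Finset.sum_const, smul_eq_mul, hk]
  -- fibers of the double labeling all have size m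
  set FB : (G ⧸ H) × (G ⧸ H) → Finset G :=
    fun p => DF.filter (fun g => (q g, q g⁻¹) = p) with hFB
  have invDF : ∀ g ∈ DF, g⁻¹ ∈ DF := by
    intro g hg
    rw [memDF] at hg ⊢
    exact invD g hg
  have hmaps2 : ∀ g ∈ DF, (q g, q g⁻¹) ∈ QD ×ˢ QD := by
    intro g hg
    rw [Finset.mem_product, hQD]
    exact ⟨Finset.mem_image_of_mem q hg, Finset.mem_image_of_mem q (invDF g hg)⟩
  have cardFB : ∀ p ∈ QD ×ˢ QD, (FB p).card = m := by
    apply aux_all_eq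
    · -- lower bound
      rintro ⟨a, a'⟩ hp
      rw [Finset.mem_product] at hp
      obtain ⟨h, hhH, hqh⟩ := repQD a hp.1
      obtain ⟨w, hwH, hqw⟩ := repQD a' hp.2
      have hinj : Set.InjOn (fun c => w⁻¹ * c * h2 * x * h) ↑KF := by
        intro c _ c' _ hcc
        dsimp only at hcc
        exact mul_left_cancel (mul_right_cancel (mul_right_cancel (mul_right_cancel hcc)))
      rw [hm]
      apply Finset.card_le_card_of_injOn _ _ hinj
      intro c hc
      obtain ⟨hcH, v, hv, hvc⟩ := (memKF c).mp hc
      rw [hFB]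
      simp only [Finset.mem_coe]
      rw [Finset.mem_filter]
      constructor
      · rw [memDF]
        exact (memD _).mpr ⟨w⁻¹ * c * h2, mul_mem (mul_mem (inv_mem hwH) hcH) hh2,
          h, hhH, by group⟩
      · have e1 : x⁻¹ * h2⁻¹ = h1 * x := by rw [← hx12]; group
        have hq1 : q (w⁻¹ * c * h2 * x * h) = a := by
          rw [← hqh]
          refine (qiff _ _).mpr ?_
          have : w⁻¹ * c * h2 * x * h * (x * h)⁻¹ = w⁻¹ * c * h2 := by group
          rw [this]
          exact mul_mem (mul_mem (inv_mem hwH) hcH) hh2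
        have hq2 : q (w⁻¹ * c * h2 * x * h)⁻¹ = a' := by
          rw [← hqw]
          refine (qiff _ _).mpr ?_
          have comp : (w⁻¹ * c * h2 * x * h)⁻¹ * (x * w)⁻¹ =
              h⁻¹ * (x⁻¹ * h2⁻¹) * (c⁻¹ * x⁻¹ * w * w⁻¹ * x⁻¹) * x := by group
          rw [comp, e1, ← hvc]
          have comp2 : h⁻¹ * (h1 * x) * ((x⁻¹ * v * x)⁻¹ * x⁻¹ * w * w⁻¹ * x⁻¹) * x =
              h⁻¹ * h1 * v⁻¹ := by group
          rw [comp2]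
          exact mul_mem (mul_mem (inv_mem ((SetLike.mem_coe).mp hhH)) (SetLike.mem_coe.mp hh1))
            (inv_mem (SetLike.mem_coe.mp hv))
        show (q (w⁻¹ * c * h2 * x * h), q (w⁻¹ * c * h2 * x * h)⁻¹) = (a, a')
        rw [hq1, hq2]
    · -- total
      simp only [hFB]
      rw [← Finset.card_eq_sum_card_fiberwise hmaps2, Finset.card_product, DFcard, HFcard]
      ring
  -- index machinery
  have hxQD : q x ∈ QD := by rw [hQD]; exact Finset.mem_image_of_mem q hxD
  have hk0 : k ≠ 0 := by rw [hk]; exact Finset.card_ne_zero_of_mem hxQD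
  haveI : NeZero k := ⟨hk0⟩
  have ee : {a : G ⧸ H // a ∈ QD} ≃ Fin k := QD.equivFin
  have hHnat : Nat.card ↥H = HF.card := by
    rw [← SetLike.coe_sort_coe, Nat.card_coe_set_eq, Set.ncard_eq_toFinset_card', hHF]
  have hbkm : b ≤ k * m := by rw [← HFcard, ← hHnat]; exact hble
  obtain ⟨y, hym, hysum, hypar⟩ :
      ∃ y : Fin k → ℕ, (∀ i, y i ≤ m) ∧ (∑ i, y i = b) ∧ (∀ i, Even (y i) ∨ Odd m) := by
    rcases Nat.even_or_odd m with hme | hmo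
    · obtain ⟨m', hm'⟩ := hme
      obtain ⟨b', hb'⟩ := hb
      have hkm' : k * (m' + m') = k * m' + k * m' := by ring
      obtain ⟨z, hz, hzsum⟩ := aux_fill m' (Finset.univ : Finset (Fin k)) b'
        (by rw [Finset.card_univ, Fintype.card_fin]; rw [hm', hkm'] at hbkm; omega)
      refine ⟨fun i => z i + z i, fun i => by show z i + z i ≤ m; have h1 := hz i; rw [hm']; omega, ?_, fun i => Or.inl ⟨z i, rfl⟩⟩
      rw [Finset.sum_add_distrib, hzsum]
      omega
    · obtain ⟨z, hz, hzsum⟩ := aux_fill m (Finset.univ : Finset (Fin k)) b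
        (by rw [Finset.card_univ, Fintype.card_fin]; exact hbkm)
      exact ⟨z, hz, hzsum, fun i => Or.inr hmo⟩
  set A := {a : G ⧸ H // a ∈ QD} with hA
  set W : A → A → ℕ := fun a a' => y (ee a + ee a') with hW
  set FF : A → A → Finset G := fun a a' => FB (↑a, ↑a') with hFF
  have cardFF : ∀ a a' : A, (FF a a').card = m := by
    intro a a'
    exact cardFB _ (Finset.mem_product.mpr ⟨a.2, a'.2⟩)
  have memFF : ∀ (a a' : A) (g : G), g ∈ FF a a' ↔ g ∈ DF ∧ q g = ↑a ∧ q g⁻¹ = ↑a' := by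
    intro a a' g
    rw [hFF]; dsimp only
    rw [hFB]; dsimp only
    rw [Finset.mem_filter, Prod.mk.injEq]
  have invFF : ∀ (a a' : A) (g : G), g ∈ FF a a' → g⁻¹ ∈ FF a' a := by
    intro a a' g hg
    rw [memFF] at hg ⊢
    exact ⟨invDF g hg.1, hg.2.2, by rw [inv_inv]; exact hg.2.1⟩
  have hsel : ∀ a a' : A, ∃ S : Finset G, S ⊆ FF a a' ∧ S.card = W a a' ∧
      (a = a' → ∀ g ∈ S, g⁻¹ ∈ S) := by
    intro a a'
    by_cases hd : a = a'
    · subst hd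
      have hWle : W a a ≤ (FF a a).card := by rw [cardFF]; exact hym _
      have hpar' : Even (W a a) ∨ Odd (FF a a).card := by
        rcases hypar (ee a + ee a) with he | ho
        · exact Or.inl he
        · rw [cardFF]; exact Or.inr ho
      obtain ⟨S, h1, h2, h3⟩ := aux_invariant_subset' (fun g => g⁻¹) (fun g => inv_inv g)
        (FF a a) (invFF a a) (W a a) hWle hpar'
      exact ⟨S, h1, h2, fun _ => h3⟩
    · obtain ⟨S, hS1, hS2⟩ := Finset.exists_subset_card_eq
        (show W a a' ≤ (FF a a').card by rw [cardFF]; exact hym _)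
      exact ⟨S, hS1, hS2, fun h => absurd h hd⟩
  choose sel hsub hcard hdiag using hsel
  set S : A → A → Finset G :=
    fun a a' => if ee a ≤ ee a' then sel a a' else (sel a' a).image (·⁻¹) with hS
  have hSsub : ∀ a a', S a a' ⊆ FF a a' := by
    intro a a'
    rw [hS]; dsimp only
    split
    · exact hsub a a'
    · intro g hg
      obtain ⟨g', hg', rfl⟩ := Finset.mem_image.mp hg
      exact invFF a' a g' (hsub a' a hg')
  have hScard : ∀ a a', (S a a').card = W a a' := by
    intro a a'
    rw [hS]; dsimp only
    split
    · exact hcard a a'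
    · rw [Finset.card_image_of_injective _ inv_injective, hcard, hW]
      dsimp only
      rw [add_comm]
  have hSinv : ∀ a a' g, g ∈ S a a' → g⁻¹ ∈ S a' a := by
    intro a a' g hg
    rcases lt_trichotomy (ee a) (ee a') with hlt | heqq | hgt
    · rw [hS] at hg ⊢
      dsimp only at hg ⊢
      rw [if_pos hlt.le] at hg
      rw [if_neg (not_le.mpr hlt)]
      exact Finset.mem_image_of_mem _ hg
    · have haa : a = a' := ee.injective heqq
      subst haa
      rw [hS] at hg ⊢
      dsimp only at hg ⊢
      rw [if_pos le_rfl] at hg ⊢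
      exact hdiag a a rfl g hg
    · rw [hS] at hg ⊢
      dsimp only at hg ⊢
      rw [if_neg (not_le.mpr hgt)] at hg
      rw [if_pos hgt.le]
      obtain ⟨g', hg', rfl⟩ := Finset.mem_image.mp hg
      rwa [inv_inv]
  set U : Finset G := Finset.univ.biUnion (fun p : A × A => S p.1 p.2) with hU
  have hUsub : U ⊆ DF := by
    intro g hg
    obtain ⟨p, _, hp⟩ := Finset.mem_biUnion.mp hg
    exact ((memFF p.1 p.2 g).mp (hSsub p.1 p.2 hp)).1
  have hUinv : ∀ g ∈ U, g⁻¹ ∈ U := by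
    intro g hg
    obtain ⟨p, _, hp⟩ := Finset.mem_biUnion.mp hg
    exact Finset.mem_biUnion.mpr ⟨(p.2, p.1), Finset.mem_univ _, hSinv p.1 p.2 g hp⟩
  set Ua : A → Finset G := fun a => U.filter (fun g => q g = ↑a) with hUa
  have hUaeq : ∀ a : A, Ua a = Finset.univ.biUnion (fun a' : A => S a a') := by
    intro a
    ext g
    constructor
    · intro hg
      rw [hUa] at hg; dsimp only at hg
      obtain ⟨hgU, hqg⟩ := Finset.mem_filter.mp hg
      rw [hU] at hgU
      obtain ⟨p, _, hp⟩ := Finset.mem_biUnion.mp hgU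
      have h1' : q g = ↑p.1 := ((memFF p.1 p.2 g).mp (hSsub p.1 p.2 hp)).2.1
      have hpa : p.1 = a := Subtype.ext (by rw [← h1', hqg])
      exact Finset.mem_biUnion.mpr ⟨p.2, Finset.mem_univ _, by rw [← hpa]; exact hp⟩
    · intro hg
      obtain ⟨a', _, hp⟩ := Finset.mem_biUnion.mp hg
      rw [hUa]; dsimp only
      refine Finset.mem_filter.mpr ⟨?_, ((memFF a a' g).mp (hSsub a a' hp)).2.1⟩
      rw [hU]
      exact Finset.mem_biUnion.mpr ⟨(a, a'), Finset.mem_univ _, hp⟩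
  have hUacard : ∀ a : A, (Ua a).card = b := by
    intro a
    rw [hUaeq, Finset.card_biUnion]
    · rw [Finset.sum_congr rfl (fun (a' : A) _ => hScard a a')]
      rw [hW]; dsimp only
      rw [Fintype.sum_equiv ee (fun a' => y (ee a + ee a')) (fun j => y (ee a + j))
        (fun a' => rfl)]
      rw [Fintype.sum_equiv (Equiv.addLeft (ee a)) (fun j => y (ee a + j)) y (fun j => rfl)]
      exact hysum
    · intro a1 _ a2 _ hne
      rw [Function.onFun, Finset.disjoint_left]
      intro g hg1 hg2
      have e1 : q g⁻¹ = ↑a1 := ((memFF a a1 g).mp (hSsub a a1 hg1)).2.2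
      have e2 : q g⁻¹ = ↑a2 := ((memFF a a2 g).mp (hSsub a a2 hg2)).2.2
      exact hne (Subtype.ext (by rw [← e1, e2]))
  have hβex : ∀ a : A, Fintype.card ↥(Ua a) = b := by
    intro a
    rw [Fintype.card_coe]
    exact hUacard a
  set β : (a : A) → ↥(Ua a) ≃ Fin b := fun a => Fintype.equivFinOfCardEq (hβex a) with hβ
  set T : Fin b → Set G := fun r => Set.range (fun a : A => ((β a).symm r : G)) with hT
  have hmemUa : ∀ (a : A) (r : Fin b), ((β a).symm r : G) ∈ Ua a := fun a r => ((β a).symm r).2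
  have hqUa : ∀ (a : A) (g : G), g ∈ Ua a → g ∈ U ∧ q g = ↑a := by
    intro a g hg
    rw [hUa] at hg; dsimp only at hg
    exact Finset.mem_filter.mp hg
  refine ⟨T, ?_, ?_, ?_⟩
  · intro r
    constructor
    · rintro g ⟨a, rfl⟩
      have hmem := (hqUa a _ (hmemUa a r)).1
      exact (memDF _).mp (hUsub hmem)
    · intro g hg
      have hgDF : g ∈ DF := (memDF g).mpr hg
      have hqg : q g ∈ QD := by rw [hQD]; exact Finset.mem_image_of_mem q hgDF
      refine ⟨((β ⟨q g, hqg⟩).symm r : G), ⟨⟨⟨q g, hqg⟩, rfl⟩, ?_⟩, ?_⟩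
      · refine (qiff _ _).mp ?_
        rw [(hqUa ⟨q g, hqg⟩ _ (hmemUa ⟨q g, hqg⟩ r)).2]
      · rintro t ⟨⟨a', rfl⟩, hth⟩
        have h1' : q ((β a').symm r : G) = ↑a' := (hqUa a' _ (hmemUa a' r)).2
        have h2' : q ((β a').symm r : G) = q g := (qiff _ _).mpr hth
        have haa : a' = (⟨q g, hqg⟩ : A) := Subtype.ext (by rw [← h1', h2'])
        rw [haa]
  · intro r r' hne
    rw [Set.disjoint_left]
    rintro g ⟨a, rfl⟩ ⟨a', hg'⟩
    have hg2 : ((β a').symm r' : G) = ((β a).symm r : G) := hg'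
    have h1' : q ((β a').symm r' : G) = ↑a' := (hqUa a' _ (hmemUa a' r')).2
    have h2' : q ((β a).symm r : G) = ↑a := (hqUa a _ (hmemUa a r)).2
    have haa : a' = a := Subtype.ext (by rw [← h1', hg2, h2'])
    subst haa
    have hsub' : (β a').symm r' = (β a').symm r := Subtype.ext hg2
    exact hne (((β a').symm.injective hsub').symm)
  · have hTU : ⋃ r, T r = (↑U : Set G) := by
      ext g
      simp only [Set.mem_iUnion, hT, Set.mem_range]
      constructor
      · rintro ⟨r, a, rfl⟩
        exact (hqUa a _ (hmemUa a r)).1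
      · intro hgU
        have hgU' : g ∈ U := hgU
        have hqg : q g ∈ QD := by rw [hQD]; exact Finset.mem_image_of_mem q (hUsub hgU')
        have hgUa : g ∈ Ua ⟨q g, hqg⟩ := by
          rw [hUa]; dsimp only
          exact Finset.mem_filter.mpr ⟨hgU', rfl⟩
        refine ⟨β ⟨q g, hqg⟩ ⟨g, hgUa⟩, ⟨q g, hqg⟩, ?_⟩
        rw [Equiv.symm_apply_apply]
    rw [hTU]
    ext g
    rw [Set.mem_inv]
    constructor
    · intro hg
      have h1' := hUinv _ (Finset.mem_coe.mp hg)
      rw [inv_inv] at h1'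
      exact Finset.mem_coe.mpr h1'
    · intro hg
      exact Finset.mem_coe.mpr (hUinv _ (Finset.mem_coe.mp hg))
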